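/- Let a, b, θ ≥ 0 and T > 0. For the ODE a'(t) = -1 + a(t) + a(t)^2 - 2a(t)/(1+a(t)) on [0,T) with the singular terminal condition a(t) → +∞ as t → T, any solution a with a(t) ≥ 1/(2(T-t)) eventually satisfies the two-sided bound (1 - (T-t))/(e^{2(T-t)}(T-t)) ≤ a(t) ≤ (1 + (T-t))/(T-t) + C for t close to T and some constant C ≥ 0. -/

import Mathlib

open Real Filter Set

lemma stmt16_aux_low (δ E : ℝ) (hδ : 0 < δ) (hE1 : 1 + δ ≤ E)
    (hEδ : E - 1 ≤ δ * E) : (1 - δ) / (E * E * δ) ≤ (E - 1)⁻¹ := by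
  have hE0 : 0 < E - 1 := by linarith
  have hEpos : (0:ℝ) < E := by linarith
  have h6 : (1 - δ) * (E - 1) ≤ E * E * δ := by
    have t1 : (1 - δ) * (E - 1) ≤ E - 1 := by nlinarith
    have t2 : δ * E ≤ δ * (E * E) := by nlinarith
    nlinarith
  rw [div_le_iff₀ (by positivity)]
  calc 1 - δ = (1 - δ) * (E - 1) * (E - 1)⁻¹ := by field_simp
  _ ≤ E * E * δ * (E - 1)⁻¹ := by
      apply mul_le_mul_of_nonneg_right h6 (le_of_lt (inv_pos.mpr hE0))
  _ = (E - 1)⁻¹ * (E * E * δ) := by ring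

set_option maxHeartbeats 1600000 in
theorem stmt_16 (T : ℝ) (hT : 0 < T) (a : ℝ → ℝ)
    (hode : ∀ t ∈ Ico (0 : ℝ) T,
      HasDerivAt a (-1 + a t + a t ^ 2 - 2 * a t / (1 + a t)) t)
    (hsing : Tendsto a (nhdsWithin T (Iio T)) atTop)
    (hlb : ∀ t ∈ Ico (0 : ℝ) T, a t ≥ 1 / (2 * (T - t))) :
    ∃ C : ℝ, 0 ≤ C ∧ ∃ δ₀ : ℝ, 0 < δ₀ ∧
      ∀ t : ℝ, T - δ₀ < t → t < T →
        (1 - (T - t)) / (Real.exp (2 * (T - t)) * (T - t)) ≤ a t ∧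
        a t ≤ (1 + (T - t)) / (T - t) + C := by
  refine ⟨0, le_refl 0, min T (1/5), lt_min hT (by norm_num), ?_⟩
  intro t ht htT
  have hδ₀T : min T (1/5) ≤ T := min_le_left _ _
  have hδ₀5 : min T (1/5) ≤ 1/5 := min_le_right _ _
  have ht0 : 0 < t := by linarith
  -- basic facts on [t, T)
  have hmem : ∀ s ∈ Ico t T, s ∈ Ico (0:ℝ) T := by
    intro s hs
    exact ⟨le_of_lt (lt_of_lt_of_le ht0 hs.1), hs.2⟩
  have hδs : ∀ s ∈ Ico t T, 0 < T - s ∧ T - s < 1/5 := by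
    intro s hs
    constructor
    · linarith [hs.2]
    · have := hs.1; linarith
  have hpos : ∀ s ∈ Ico t T, 0 < a s := by
    intro s hs
    have h1 := hlb s (hmem s hs)
    have h2 := (hδs s hs).1
    have : 0 < 1 / (2 * (T - s)) := by positivity
    linarith
  have hinvle : ∀ s ∈ Ico t T, (a s)⁻¹ ≤ 2 * (T - s) := by
    intro s hs
    have h1 := hlb s (hmem s hs)
    have h2 := (hδs s hs).1
    have h3 := hpos s hs
    rw [inv_le_comm₀ h3 (by positivity)]
    calc (2 * (T - s))⁻¹ = 1 / (2 * (T - s)) := by rw [one_div]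
    _ ≤ a s := h1
  -- the two auxiliary functions
  set F : ℝ → ℝ := fun x => Real.exp x * (1 + (a x)⁻¹) with hFdef
  set G : ℝ → ℝ := fun x => (a x)⁻¹ - (T - x) + 4 * (T - x) ^ 3 with hGdef
  have hFd : ∀ s ∈ Ico t T, HasDerivAt F
      (Real.exp s * (1 + (a s)⁻¹) +
        Real.exp s * (-(-1 + a s + a s ^ 2 - 2 * a s / (1 + a s)) / a s ^ 2)) s := by
    intro s hs
    have h : HasDerivAt F (Real.exp s * (1 + (a s)⁻¹) +
        Real.exp s * (0 + -(-1 + a s + a s ^ 2 - 2 * a s / (1 + a s)) / a s ^ 2)) s :=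
      (Real.hasDerivAt_exp s).mul
      ((hasDerivAt_const s (1:ℝ)).add ((hode s (hmem s hs)).inv (ne_of_gt (hpos s hs))))
    simpa only [zero_add] using h
  have hGd : ∀ s ∈ Ico t T, HasDerivAt G
      ((-(-1 + a s + a s ^ 2 - 2 * a s / (1 + a s)) / a s ^ 2) - (-1)
        + 4 * (3 * (T - s) ^ 2 * (-1))) s := by
    intro s hs
    have h1 : HasDerivAt (fun x : ℝ => T - x) (-1) s := (hasDerivAt_id s).const_sub T
    have h2 : HasDerivAt (fun x : ℝ => (T - x) ^ 3) (3 * (T - s) ^ 2 * (-1)) s := by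
      exact (h1.pow 3).congr_deriv (by norm_num)
    exact ((((hode s (hmem s hs)).inv (ne_of_gt (hpos s hs))).sub h1).add (h2.const_mul 4))
  -- derivative sign for F
  have hFpos : ∀ s ∈ Ico t T,
      0 ≤ Real.exp s * (1 + (a s)⁻¹) +
        Real.exp s * (-(-1 + a s + a s ^ 2 - 2 * a s / (1 + a s)) / a s ^ 2) := by
    intro s hs
    have hA : 0 < a s := hpos s hs
    have h1A : 0 < 1 + a s := by linarith
    have hDle : -1 + a s + a s ^ 2 - 2 * a s / (1 + a s) ≤ a s ^ 2 + a s := by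
      have h0 : 0 ≤ 2 * a s / (1 + a s) := by positivity
      linarith
    have hfrac : (a s ^ 2 + a s) / a s ^ 2 = 1 + (a s)⁻¹ := by
      field_simp
    have hdiv : (-1 + a s + a s ^ 2 - 2 * a s / (1 + a s)) / a s ^ 2 ≤ 1 + (a s)⁻¹ := by
      rw [← hfrac]
      gcongr
    have hsum : 0 ≤ (1 + (a s)⁻¹) +
        (-(-1 + a s + a s ^ 2 - 2 * a s / (1 + a s)) / a s ^ 2) := by
      rw [neg_div]
      linarith
    nlinarith [Real.exp_pos s, hsum]
  -- derivative sign for G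
  have hGneg : ∀ s ∈ Ico t T,
      ((-(-1 + a s + a s ^ 2 - 2 * a s / (1 + a s)) / a s ^ 2) - (-1)
        + 4 * (3 * (T - s) ^ 2 * (-1))) ≤ 0 := by
    intro s hs
    have hA : 0 < a s := hpos s hs
    have h1A : 0 < 1 + a s := by linarith
    have hinv := hinvle s hs
    have hδ := hδs s hs
    have key : (-(-1 + a s + a s ^ 2 - 2 * a s / (1 + a s)) / a s ^ 2)
        = (a s)⁻¹ ^ 2 - (a s)⁻¹ - 1 + 2 / (a s * (1 + a s)) := by
      field_simp
      ring
    rw [key]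
    have e3 : 0 < (a s)⁻¹ := inv_pos.mpr hA
    have e1 : (a s)⁻¹ ^ 2 ≤ (2 * (T - s)) ^ 2 := by nlinarith
    have e2 : 2 / (a s * (1 + a s)) ≤ 2 * (a s)⁻¹ ^ 2 := by
      rw [div_le_iff₀ (by positivity)]
      have h2 : (a s)⁻¹ * a s = 1 := inv_mul_cancel₀ (ne_of_gt hA)
      nlinarith
    nlinarith [hδ.1]
  -- monotonicity of F, antitonicity of G on [t, T)
  have hconv : Convex ℝ (Ico t T) := convex_Ico t T
  have hFdiff : ∀ s ∈ Ico t T, DifferentiableAt ℝ F s := fun s hs =>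
    (hFd s hs).differentiableAt
  have hGdiff : ∀ s ∈ Ico t T, DifferentiableAt ℝ G s := fun s hs =>
    (hGd s hs).differentiableAt
  have hintsub : interior (Ico t T) ⊆ Ico t T := interior_subset
  have hFmono : MonotoneOn F (Ico t T) := by
    apply monotoneOn_of_deriv_nonneg hconv
    · exact fun s hs => (hFdiff s hs).continuousAt.continuousWithinAt
    · exact fun s hs => ((hFdiff s (hintsub hs)).differentiableWithinAt)
    · intro s hs
      rw [(hFd s (hintsub hs)).deriv]
      exact hFpos s (hintsub hs)
  have hGanti : AntitoneOn G (Ico t T) := by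
    apply antitoneOn_of_deriv_nonpos hconv
    · exact fun s hs => (hGdiff s hs).continuousAt.continuousWithinAt
    · exact fun s hs => ((hGdiff s (hintsub hs)).differentiableWithinAt)
    · intro s hs
      rw [(hGd s (hintsub hs)).deriv]
      exact hGneg s (hintsub hs)
  -- limits as s → T⁻
  have hu0 : Tendsto (fun s => (a s)⁻¹) (nhdsWithin T (Iio T)) (nhds 0) :=
    hsing.inv_tendsto_atTop
  have hTs : Tendsto (fun s : ℝ => T - s) (nhdsWithin T (Iio T)) (nhds 0) := by
    have h : Tendsto (fun s : ℝ => T - s) (nhds T) (nhds (T - T)) :=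
      tendsto_const_nhds.sub tendsto_id
    simpa using h.mono_left nhdsWithin_le_nhds
  have hFlim : Tendsto F (nhdsWithin T (Iio T)) (nhds (Real.exp T)) := by
    have h1 : Tendsto (fun s : ℝ => Real.exp s) (nhdsWithin T (Iio T)) (nhds (Real.exp T)) :=
      (Real.continuous_exp.tendsto T).mono_left nhdsWithin_le_nhds
    have := h1.mul (hu0.const_add 1)
    simpa using this
  have hGlim : Tendsto G (nhdsWithin T (Iio T)) (nhds 0) := by
    have := (hu0.sub hTs).add ((hTs.pow 3).const_mul 4)
    simpa using this
  have hev : Ioo t T ∈ nhdsWithin T (Iio T) :=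
    Ioo_mem_nhdsLT_of_mem ⟨htT, le_refl T⟩
  have htmem : t ∈ Ico t T := ⟨le_refl t, htT⟩
  -- F t ≤ exp T
  have hFt : F t ≤ Real.exp T := by
    apply ge_of_tendsto hFlim
    filter_upwards [hev] with s hs
    exact hFmono htmem ⟨le_of_lt hs.1, hs.2⟩ (le_of_lt hs.1)
  -- 0 ≤ G t
  have hGt : 0 ≤ G t := by
    apply le_of_tendsto hGlim
    filter_upwards [hev] with s hs
    exact hGanti htmem ⟨le_of_lt hs.1, hs.2⟩ (le_of_lt hs.1)
  -- now conclude
  have hδpos : 0 < T - t := by linarith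
  have hδ5 : T - t < 1/5 := by linarith
  have hApos : 0 < a t := hpos t htmem
  have hu : 0 < (a t)⁻¹ := inv_pos.mpr hApos
  constructor
  · -- lower bound
    have h1 : Real.exp t * (1 + (a t)⁻¹) ≤ Real.exp T := hFt
    have h2 : 1 + (a t)⁻¹ ≤ Real.exp (T - t) := by
      rw [Real.exp_sub, le_div_iff₀ (Real.exp_pos t)]
      nlinarith
    have h3 : (a t)⁻¹ ≤ Real.exp (T - t) - 1 := by linarith
    have hE1 : 0 < Real.exp (T - t) - 1 := by
      have := Real.add_one_lt_exp (ne_of_gt hδpos)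
      linarith
    have h4 : (Real.exp (T - t) - 1)⁻¹ ≤ a t :=
      (inv_le_comm₀ hE1 hApos).mpr h3
    have h5 : (1 - (T - t)) / (Real.exp (2 * (T - t)) * (T - t))
        ≤ (Real.exp (T - t) - 1)⁻¹ := by
      have h2δ : Real.exp (2 * (T - t)) = Real.exp (T - t) * Real.exp (T - t) := by
        rw [← Real.exp_add]; ring_nf
      rw [h2δ]
      have hE1' : 1 + (T - t) ≤ Real.exp (T - t) := by linarith [Real.add_one_le_exp (T - t)]
      have hEδ : Real.exp (T - t) - 1 ≤ (T - t) * Real.exp (T - t) := by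
        have hEmδ : 1 - (T - t) ≤ Real.exp (-(T - t)) := by
          have := Real.add_one_le_exp (-(T - t)); linarith
        have h := mul_le_mul_of_nonneg_right hEmδ (le_of_lt (Real.exp_pos (T - t)))
        rw [← Real.exp_add] at h
        simp only [neg_add_cancel, Real.exp_zero] at h
        nlinarith [Real.exp_pos (T - t)]
      exact stmt16_aux_low (T - t) (Real.exp (T - t)) hδpos hE1' hEδ
    exact le_trans h5 h4
  · -- upper bound
    have h1 : (T - t) - 4 * (T - t) ^ 3 ≤ (a t)⁻¹ := by
      have h := hGt
      simp only [hGdef] at h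
      linarith
    have hsq : (T - t) ^ 2 ≤ 1 / 25 := by nlinarith
    have hcub : (T - t) ^ 3 ≤ (1 / 25) * (T - t) := by
      nlinarith [mul_le_mul_of_nonneg_right hsq hδpos.le]
    have h2 : 0 < (T - t) - 4 * (T - t) ^ 3 := by nlinarith
    have h3 : a t ≤ ((T - t) - 4 * (T - t) ^ 3)⁻¹ := by
      rw [← inv_inv (a t)]
      exact inv_anti₀ h2 h1
    have h4 : ((T - t) - 4 * (T - t) ^ 3)⁻¹ ≤ (1 + (T - t)) / (T - t) := by
      rw [← one_div, div_le_div_iff₀ h2 hδpos]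
      have hfac : 0 ≤ (T - t) ^ 2 * (1 - 4 * (T - t) - 4 * (T - t) ^ 2) := by
        apply mul_nonneg (sq_nonneg _)
        nlinarith
      nlinarith [hfac]
    calc a t ≤ ((T - t) - 4 * (T - t) ^ 3)⁻¹ := h3
    _ ≤ (1 + (T - t)) / (T - t) := h4
    _ ≤ (1 + (T - t)) / (T - t) + 0 := by linarith
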